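/- Let m ≥ 1 be an integer and α ∈ ℂ. Let f : ℝ × ℤ → ℂ be differentiable in the first (time) variable and satisfy the modified Bogoyavlensky lattice ∂_t f(t,n) = f(t,n)·(f(t,n) − α)·(∏_{s=1}^{m} f(t,n+s) − ∏_{s=1}^{m} f(t,n−s)) for all t and n. Then the function u(t,n) := (f(t,n) − α)·∏_{s=1}^{m} f(t,n+s) satisfies the Bogoyavlensky lattice ∂_t u(t,n) = u(t,n)·(Σ_{s=1}^{m} u(t,n+s) − Σ_{s=1}^{m} u(t,n−s)) for all t and n. -/

import Mathlib

open Finset in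
lemma miura_key (m : ℕ) (α : ℂ) (F : ℤ → ℂ) (n : ℤ) :
    F n * ((∏ s ∈ range m, F (n + s + 1)) - ∏ s ∈ range m, F (n - s - 1))
      + ∑ k ∈ range m, (F (n + k + 1) - α) *
          ((∏ s ∈ range m, F (n + k + 1 + s + 1)) - ∏ s ∈ range m, F (n + k + 1 - s - 1))
    = (∑ k ∈ range m, (F (n + k + 1) - α) * ∏ s ∈ range m, F (n + k + 1 + s + 1))
      - ∑ k ∈ range m, (F (n - k - 1) - α) * ∏ s ∈ range m, F (n - k - 1 + s + 1) := by
  set S : ℕ → ℂ := fun k => ∏ j ∈ range m, F (n + (k : ℤ) + 1 - m + j) with hS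
  set R : ℕ → ℂ := fun k => ∏ j ∈ range (m + 1), F (n + (k : ℤ) - m + j) with hR
  have hQ : ∀ k : ℕ, (∏ s ∈ range m, F (n + (k : ℤ) + 1 - s - 1)) = S k := by
    intro k
    simp only [hS]
    rw [← Finset.prod_range_reflect (fun j => F (n + (k : ℤ) + 1 - m + j)) m]
    refine Finset.prod_congr rfl fun j hj => ?_
    simp only [Finset.mem_range] at hj
    congr 1
    omega
  have hP : ∀ k < m, (∏ s ∈ range m, F (n - (k : ℤ) - 1 + s + 1)) = S (m - 1 - k) := by
    intro k hk
    simp only [hS]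
    refine Finset.prod_congr rfl fun j hj => ?_
    congr 1
    omega
  have hRS1 : ∀ k : ℕ, F (n + (k : ℤ) + 1) * S k = R (k + 1) := by
    intro k
    simp only [hS, hR, Finset.prod_range_succ]
    rw [mul_comm]
    congr 1
    · refine Finset.prod_congr rfl fun j hj => ?_
      congr 1
      push_cast; ring
    · congr 1
      push_cast; ring
  have hRS2 : ∀ k < m, F (n - (k : ℤ) - 1) * S (m - 1 - k) = R (m - 1 - k) := by
    intro k hk
    simp only [hS, hR, Finset.prod_range_succ']
    rw [mul_comm]
    congr 1
    · refine Finset.prod_congr rfl fun j hj => ?_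
      congr 1
      omega
    · congr 1
      omega
  have hRm : R m = F n * ∏ s ∈ range m, F (n + s + 1) := by
    simp only [hR, Finset.prod_range_succ']
    rw [mul_comm]
    congr 1
    · congr 1; push_cast; ring
    · refine Finset.prod_congr rfl fun j hj => ?_
      congr 1
      push_cast; ring
  have hR0 : R 0 = F n * ∏ s ∈ range m, F (n - s - 1) := by
    simp only [hR, Finset.prod_range_succ]
    rw [mul_comm]
    congr 1
    · congr 1; push_cast; ring
    · rw [← Finset.prod_range_reflect (fun j => F (n + ((0 : ℕ) : ℤ) - m + j)) m]
      refine Finset.prod_congr rfl fun j hj => ?_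
      simp only [Finset.mem_range] at hj
      congr 1
      push_cast
      omega
  have e1 : ∑ k ∈ range m, (F (n + k + 1) - α) *
          ((∏ s ∈ range m, F (n + k + 1 + s + 1)) - ∏ s ∈ range m, F (n + k + 1 - s - 1))
      = (∑ k ∈ range m, (F (n + k + 1) - α) * ∏ s ∈ range m, F (n + k + 1 + s + 1))
        - (∑ k ∈ range m, R (k + 1)) + α * ∑ k ∈ range m, S k := by
    rw [show (∑ k ∈ range m, (F (n + k + 1) - α) *
          ((∏ s ∈ range m, F (n + k + 1 + s + 1)) - ∏ s ∈ range m, F (n + k + 1 - s - 1)))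
        = ∑ k ∈ range m, ((F (n + k + 1) - α) * ∏ s ∈ range m, F (n + k + 1 + s + 1)
            - R (k + 1) + α * S k) from
      Finset.sum_congr rfl fun k _ => by rw [hQ k, ← hRS1 k]; ring]
    rw [Finset.sum_add_distrib, Finset.sum_sub_distrib, ← Finset.mul_sum]
  have e2 : ∑ k ∈ range m, (F (n - k - 1) - α) * ∏ s ∈ range m, F (n - k - 1 + s + 1)
      = (∑ k ∈ range m, R k) - α * ∑ k ∈ range m, S k := by
    rw [show (∑ k ∈ range m, (F (n - k - 1) - α) * ∏ s ∈ range m, F (n - k - 1 + s + 1))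
        = ∑ k ∈ range m, (R (m - 1 - k) - α * S (m - 1 - k)) from
      Finset.sum_congr rfl fun k hk => by
        rw [hP k (Finset.mem_range.mp hk), ← hRS2 k (Finset.mem_range.mp hk)]; ring]
    rw [Finset.sum_sub_distrib, ← Finset.mul_sum,
      Finset.sum_range_reflect (fun k => R k) m, Finset.sum_range_reflect (fun k => S k) m]
  have e3 : F n * ((∏ s ∈ range m, F (n + s + 1)) - ∏ s ∈ range m, F (n - s - 1))
      = (∑ k ∈ range m, R (k + 1)) - ∑ k ∈ range m, R k := by
    rw [← Finset.sum_sub_distrib, Finset.sum_range_sub R, hRm, hR0]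
    ring
  rw [e1, e2, e3]
  ring

/-- The Miura-type substitution `u = f_m ⋯ f_1 (f - α)` maps solutions of the
modified Bogoyavlensky lattice into solutions of the Bogoyavlensky lattice. -/
theorem miura_modified_to_bogoyavlensky_first
    (m : ℕ) (hm : 1 ≤ m) (α : ℂ)
    (f : ℝ → ℤ → ℂ)
    (hf : ∀ (t : ℝ) (n : ℤ),
      HasDerivAt (fun τ => f τ n)
        (f t n * (f t n - α) *
          ((∏ s ∈ Finset.range m, f t (n + s + 1)) -
            ∏ s ∈ Finset.range m, f t (n - s - 1))) t)
    (u : ℝ → ℤ → ℂ)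
    (hu : ∀ (t : ℝ) (n : ℤ),
      u t n = (f t n - α) * ∏ s ∈ Finset.range m, f t (n + s + 1)) :
    ∀ (t : ℝ) (n : ℤ),
      HasDerivAt (fun τ => u τ n)
        (u t n *
          ((∑ s ∈ Finset.range m, u t (n + s + 1)) -
            ∑ s ∈ Finset.range m, u t (n - s - 1))) t := by
  intro t n
  have hfun : (fun τ => u τ n)
      = fun τ => (f τ n - α) * ∏ s ∈ Finset.range m, f τ (n + s + 1) :=
    funext fun τ => hu τ n
  rw [hfun]
  have hprod : HasDerivAt (fun τ => ∏ s ∈ Finset.range m, f τ (n + s + 1))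
      (∑ k ∈ Finset.range m, (∏ j ∈ (Finset.range m).erase k, f t (n + j + 1)) •
        (f t (n + k + 1) * (f t (n + k + 1) - α) *
          ((∏ s ∈ Finset.range m, f t (n + k + 1 + s + 1)) -
            ∏ s ∈ Finset.range m, f t (n + k + 1 - s - 1)))) t :=
    HasDerivAt.fun_finsetProd (f := fun (k : ℕ) (τ : ℝ) => f τ (n + k + 1))
      (fun k _ => hf t (n + k + 1))
  convert ((hf t n).sub_const α).fun_mul hprod using 1
  · rfl
  simp only [smul_eq_mul]
  rw [Finset.sum_congr rfl (fun k hk => show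
      (∏ j ∈ (Finset.range m).erase k, f t (n + j + 1)) *
        (f t (n + k + 1) * (f t (n + k + 1) - α) *
          ((∏ s ∈ Finset.range m, f t (n + k + 1 + s + 1)) -
            ∏ s ∈ Finset.range m, f t (n + k + 1 - s - 1)))
      = (∏ s ∈ Finset.range m, f t (n + s + 1)) *
          ((f t (n + k + 1) - α) *
            ((∏ s ∈ Finset.range m, f t (n + k + 1 + s + 1)) -
              ∏ s ∈ Finset.range m, f t (n + k + 1 - s - 1))) from by
    linear_combination ((f t (n + k + 1) - α) *
        ((∏ s ∈ Finset.range m, f t (n + k + 1 + s + 1)) -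
          ∏ s ∈ Finset.range m, f t (n + k + 1 - s - 1))) *
      Finset.mul_prod_erase (Finset.range m) (fun j => f t (n + j + 1)) hk), ← Finset.mul_sum]
  simp only [hu]
  linear_combination (-((f t n - α) * ∏ s ∈ Finset.range m, f t (n + s + 1))) *
    miura_key m α (f t) n
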